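/- arXiv:1109.3641 — 2 statements merged into one kernel-verified Lean document; each statement's English description precedes it below -/
import Mathlib

section
/- An ascent sequence avoids the pattern 001 if and only if it consists of a strictly increasing prefix 0,1,2,...,k followed by a weakly decreasing sequence of letters each at most k. Consequently the number of ascent sequences of length n avoiding 001 is 2^{n-1}. -/
def ascList (l : List ℕ) : ℕ :=
  (l.zip l.tail).countP (fun p => decide (p.1 < p.2))

def IsAscSeq (l : List ℕ) : Prop :=
  l ≠ [] ∧ l.getD 0 0 = 0 ∧
    ∀ i, 0 < i → i < l.length → l.getD i 0 ≤ ascList (l.take i) + 1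

def Contains001 (l : List ℕ) : Prop :=
  ∃ i j k, i < j ∧ j < k ∧ k < l.length ∧
    l.getD i 0 = l.getD j 0 ∧ l.getD j 0 < l.getD k 0

theorem ascList_cons_cons (x y : ℕ) (t : List ℕ) :
    ascList (x :: y :: t) = (if x < y then 1 else 0) + ascList (y :: t) := by
  simp [ascList, List.countP_cons]
  split <;> simp [Nat.add_comm]

theorem ascList_append_left (a b : List ℕ) : ascList a ≤ ascList (a ++ b) := by
  induction a with
  | nil => simp [ascList]
  | cons x a ih =>
    cases a with
    | nil => simp [ascList]
    | cons y t =>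
      simp only [List.cons_append, ascList_cons_cons]
      exact Nat.add_le_add_left (by simpa using ih) _

theorem ascList_map_succ (l : List ℕ) :
    ascList (l.map (· + 1)) = ascList l := by
  induction l with
  | nil => rfl
  | cons x a ih =>
    cases a with
    | nil => rfl
    | cons y t =>
      simp only [List.map_cons, ascList_cons_cons] at *
      simp [ih]

theorem ascList_range (k : ℕ) : ascList (List.range (k + 1)) = k := by
  induction k with
  | zero => rfl
  | succ k ih =>
    rw [List.range_succ_eq_map, List.range_succ_eq_map (n := k), List.map_cons]
    rw [ascList_cons_cons, if_pos (by omega)]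
    rw [← List.map_cons, ← List.range_succ_eq_map, ascList_map_succ, ih]
    omega

-- facts from the normal form
section form
variable {l : List ℕ} {m : ℕ}

theorem form_len (h1 : l.take (m+1) = List.range (m+1)) : m + 1 ≤ l.length := by
  have := congrArg List.length h1
  simp at this; omega

theorem form_getD_lt (h1 : l.take (m+1) = List.range (m+1)) {i : ℕ} (hi : i < m + 1) :
    l.getD i 0 = i := by
  have hlen := form_len h1
  rw [List.getD_eq_getElem l 0 (by omega)]
  have h2 : (l.take (m+1))[i]'(by simp; omega) = (List.range (m+1))[i]'(by simp; omega) :=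
    List.getElem_of_eq h1 _
  have h0 : l[i] = (l.take (m+1))[i]'(by simp; omega) := (List.getElem_take ..).symm
  rw [h0, h2]
  simp

theorem form_getD_ge (h3 : ∀ x ∈ l.drop (m+1), x ≤ m) {i : ℕ}
    (hi : m + 1 ≤ i) (hi' : i < l.length) : l.getD i 0 ≤ m := by
  rw [List.getD_eq_getElem l 0 hi']
  apply h3
  have : l[i] = (l.drop (m+1))[i - (m+1)]'(by simp; omega) := by
    rw [List.getElem_drop]
    congr 1; omega
  rw [this]
  exact List.getElem_mem _
end form

theorem form_avoid {l : List ℕ} {m : ℕ}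
    (h1 : l.take (m+1) = List.range (m+1))
    (h2 : (l.drop (m+1)).Pairwise (· ≥ ·))
    (h3 : ∀ x ∈ l.drop (m+1), x ≤ m) : ¬ Contains001 l := by
  rintro ⟨i, j, k, hij, hjk, hk, he, hlt⟩
  rcases lt_or_ge j (m+1) with hj | hj
  · rw [form_getD_lt h1 hj, form_getD_lt h1 (by omega)] at he
    omega
  · have hk' : l.getD j 0 ≥ l.getD k 0 := by
      rw [List.getD_eq_getElem l 0 (by omega : j < l.length),
          List.getD_eq_getElem l 0 hk]
      have hj2 : l[j] = (l.drop (m+1))[j - (m+1)]'(by simp; omega) := by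
        rw [List.getElem_drop]; congr 1; omega
      have hk2 : l[k] = (l.drop (m+1))[k - (m+1)]'(by simp; omega) := by
        rw [List.getElem_drop]; congr 1; omega
      rw [hj2, hk2]
      exact List.pairwise_iff_getElem.mp h2 _ _ _ _ (by omega)
    omega

theorem form_ascseq {l : List ℕ} {m : ℕ}
    (h1 : l.take (m+1) = List.range (m+1))
    (h3 : ∀ x ∈ l.drop (m+1), x ≤ m) : IsAscSeq l := by
  have hlen := form_len h1
  refine ⟨by rintro rfl; simp at hlen, ?_, ?_⟩
  · exact form_getD_lt h1 (by omega)
  · intro i hi hi'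
    rcases lt_or_ge i (m+1) with h | h
    · rw [form_getD_lt h1 h]
      have ht : l.take i = List.range i := by
        have : l.take i = (l.take (m+1)).take i := by
          rw [List.take_take]; congr 1; omega
        rw [this, h1, List.take_range]; congr 1; omega
      rw [ht]
      obtain ⟨i', rfl⟩ : ∃ i', i = i' + 1 := ⟨i - 1, by omega⟩
      rw [ascList_range]
    · have hb := form_getD_ge h3 h hi'
      have : m ≤ ascList (l.take i) := by
        have : l.take i = l.take (m+1) ++ (l.drop (m+1)).take (i - (m+1)) := by
          rw [← List.take_add]
          congr 1; omega
        rw [this, h1]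
        calc m = ascList (List.range (m+1)) := (ascList_range m).symm
        _ ≤ _ := ascList_append_left _ _
      omega

theorem avoid_form {l : List ℕ} (hasc : IsAscSeq l) (hav : ¬ Contains001 l) :
    ∃ m, l.take (m + 1) = List.range (m + 1) ∧
      (l.drop (m + 1)).Pairwise (· ≥ ·) ∧ ∀ x ∈ l.drop (m + 1), x ≤ m := by
  obtain ⟨hne, h0, hstep⟩ := hasc
  have hlen : 1 ≤ l.length := by
    cases l with | nil => exact absurd rfl hne | cons a t => simp
  have key : ∀ i j k, i < j → j < k → k < l.length → l.getD i 0 = l.getD j 0 →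
      l.getD k 0 ≤ l.getD j 0 := by
    intro i j k hij hjk hk he
    by_contra hc
    exact hav ⟨i, j, k, hij, hjk, hk, he, by omega⟩
  by_cases hall : ∀ i, i < l.length → l.getD i 0 = i
  · refine ⟨l.length - 1, ?_, ?_, ?_⟩
    · have h1 : l.length - 1 + 1 = l.length := by omega
      rw [h1, List.take_length]
      apply List.ext_getElem (by simp)
      intro i hi _
      rw [← List.getD_eq_getElem l 0 hi, hall i hi]
      simp
    · rw [List.drop_eq_nil_of_le (as := l) (i := l.length - 1 + 1) (by omega)]; exact List.Pairwise.nil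
    · rw [List.drop_eq_nil_of_le (as := l) (i := l.length - 1 + 1) (by omega)]; simp
  · push_neg at hall
    have hex : ∃ p, p < l.length ∧ l.getD p 0 ≠ p := hall
    obtain ⟨p, hplen, hpne, hmin⟩ :
        ∃ p, p < l.length ∧ l.getD p 0 ≠ p ∧ ∀ q, q < p → q < l.length → l.getD q 0 = q := by
      refine ⟨Nat.find hex, (Nat.find_spec hex).1, (Nat.find_spec hex).2, ?_⟩
      intro q hq hql
      have := Nat.find_min hex hq
      push_neg at this
      exact this hql
    have hp1 : 1 ≤ p := by
      rcases Nat.eq_zero_or_pos p with h | h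
      · exact absurd (h ▸ h0) (h ▸ hpne)
      · exact h
    have htake : l.take p = List.range p := by
      apply List.ext_getElem (by simp [List.length_range]; omega)
      intro i hi hi'
      have hip : i < p := by simpa using hi'
      have hil : i < l.length := by omega
      have h4 : (l.take p)[i]'(by simp; omega) = l[i] := List.getElem_take ..
      rw [h4, ← List.getD_eq_getElem l 0 hil, hmin i hip hil]
      simp
    have hpm : l.getD p 0 ≤ p - 1 := by
      have hs := hstep p (by omega) hplen
      rw [htake] at hs
      obtain ⟨p', hpp⟩ : ∃ p', p = p' + 1 := ⟨p - 1, by omega⟩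
      subst hpp
      rw [ascList_range] at hs
      omega
    obtain ⟨m, hpm1⟩ : ∃ m, p = m + 1 := ⟨p - 1, by omega⟩
    subst hpm1
    rw [Nat.add_sub_cancel] at hpm
    -- key bound
    have hK : ∀ q, m + 1 ≤ q → q < l.length → l.getD q 0 ≤ m := by
      intro q hq
      induction q, hq using Nat.le_induction with
      | base => intro _; omega
      | succ q hq ih =>
        intro hq1
        have hql : q < l.length := by omega
        have hb := ih hql
        have := key (l.getD q 0) q (q+1) (by omega) (by omega) hq1
          (by rw [hmin (l.getD q 0) (by omega) (by omega)])
        omega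
    have hK2 : ∀ q, m + 1 ≤ q → q + 1 < l.length → l.getD (q+1) 0 ≤ l.getD q 0 := by
      intro q hq hq1
      have hb := hK q hq (by omega)
      exact key (l.getD q 0) q (q+1) (by omega) (by omega) hq1
        (by rw [hmin (l.getD q 0) (by omega) (by omega)])
    refine ⟨m, htake, ?_, ?_⟩
    · rw [← List.isChain_iff_pairwise]
      rw [List.isChain_iff_getElem]
      intro i hi
      simp only [List.length_drop] at hi
      simp only [List.get_eq_getElem, List.getElem_drop]
      rw [← List.getD_eq_getElem l 0 (by omega), ← List.getD_eq_getElem l 0 (by omega)]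
      have h5 : m + 1 + (i + 1) = (m + 1 + i) + 1 := by omega
      rw [h5]
      exact hK2 (m + 1 + i) (by omega) (by omega)
    · intro x hx
      obtain ⟨i, hi, rfl⟩ := List.mem_iff_getElem.mp hx
      simp only [List.length_drop] at hi
      rw [List.getElem_drop, ← List.getD_eq_getElem l 0 (by omega)]
      exact hK (m + 1 + i) (by omega) (by omega)


def decFinset : ℕ → ℕ → Finset (List ℕ)
  | 0, _ => {[]}
  | (L+1), m => (Finset.range (m+1)).biUnion fun v => (decFinset L v).image (v :: ·)

theorem mem_decFinset (L m : ℕ) (l : List ℕ) :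
    l ∈ decFinset L m ↔ l.length = L ∧ l.Pairwise (· ≥ ·) ∧ ∀ x ∈ l, x ≤ m := by
  induction L generalizing m l with
  | zero =>
    simp [decFinset]
    intro h; subst h; simp
  | succ L ih =>
    simp only [decFinset, Finset.mem_biUnion, Finset.mem_range, Finset.mem_image]
    constructor
    · rintro ⟨v, hv, t, ht, rfl⟩
      obtain ⟨hlen, hsort, hbd⟩ := (ih v t).mp ht
      refine ⟨by simp [hlen], List.pairwise_cons.mpr ⟨fun x hx => hbd x hx, hsort⟩, ?_⟩
      intro x hx
      rcases List.mem_cons.mp hx with rfl | hx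
      · omega
      · exact le_trans (hbd x hx) (by omega)
    · rintro ⟨hlen, hsort, hbd⟩
      cases l with
      | nil => simp at hlen
      | cons v t =>
        obtain ⟨hvt, hsort'⟩ := List.pairwise_cons.mp hsort
        refine ⟨v, by have := hbd v (by simp); omega, t, (ih v t).mpr ⟨by simpa using hlen, hsort', fun x hx => hvt x hx⟩, rfl⟩

theorem card_decFinset (L m : ℕ) : (decFinset L m).card = (L + m).choose m := by
  induction L generalizing m with
  | zero => simp [decFinset]
  | succ L ih =>
    rw [decFinset, Finset.card_biUnion]
    · have : ∀ v ∈ Finset.range (m+1), ((decFinset L v).image (v :: ·)).card = (L + v).choose v := by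
        intro v _
        rw [Finset.card_image_of_injective _ (fun a b h => by injection h), ih]
      rw [Finset.sum_congr rfl this]
      -- ∑ v in range (m+1), (L+v).choose v = (L+1+m).choose m
      have h2 : ∀ v ∈ Finset.range (m+1), (L + v).choose v = (L + v).choose L :=
        fun v _ => Nat.choose_symm_of_eq_add (by omega)
      rw [Finset.sum_congr rfl h2]
      have h3 : ∑ i ∈ Finset.Icc L (L + m), i.choose L
          = ∑ v ∈ Finset.range (m+1), (L + v).choose L := by
        rw [← Finset.Ico_add_one_right_eq_Icc, Finset.sum_Ico_eq_sum_range]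
        have : L + m + 1 - L = m + 1 := by omega
        rw [this]
      rw [← h3, Nat.sum_Icc_choose]
      have h4 : (L+1+m).choose m = (L+1+m).choose (L+1) := Nat.choose_symm_of_eq_add (by omega)
      rw [h4]
      congr 1
      omega
    · intro a _ b _ hab
      simp only [Function.onFun, Finset.disjoint_left, Finset.mem_image]
      rintro x ⟨t, _, rfl⟩ ⟨t', _, h⟩
      injection h with h1
      exact hab h1.symm


def mainFinset (n : ℕ) : Finset (List ℕ) :=
  (Finset.range n).biUnion fun m => (decFinset (n - 1 - m) m).image (List.range (m+1) ++ ·)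

theorem mainFinset_disj_aux {n a b : ℕ} (hb : b < n) (hab : a < b) :
    Disjoint ((decFinset (n - 1 - a) a).image (List.range (a+1) ++ ·))
      ((decFinset (n - 1 - b) b).image (List.range (b+1) ++ ·)) := by
  simp only [Finset.disjoint_left, Finset.mem_image]
  rintro l ⟨t, ht, rfl⟩ ⟨t', ht', heq⟩
  obtain ⟨hlen, _, hbd⟩ := (mem_decFinset _ _ t).mp ht
  have htne : 0 < t.length := by omega
  have h1 : (List.range (a+1) ++ t)[a+1]'(by simp [List.length_range]; omega) = t[0] := by
    rw [List.getElem_append_right (by simp [List.length_range])]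
    simp
  have h2 : (List.range (b+1) ++ t')[a+1]'(by simp [List.length_range]; omega)
      = a + 1 := by
    rw [List.getElem_append_left (by simp [List.length_range]; omega)]
    simp
  have h3 : t[0] ≤ a := hbd _ (List.getElem_mem _)
  have h4 := List.getElem_of_eq heq (show a+1 < (List.range (b+1) ++ t').length by
    simp [List.length_range]; omega)
  rw [h1, h2] at h4
  omega

theorem card_mainFinset {n : ℕ} (hn : 1 ≤ n) : (mainFinset n).card = 2 ^ (n - 1) := by
  rw [mainFinset, Finset.card_biUnion]
  · have h1 : ∀ m ∈ Finset.range n,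
        ((decFinset (n - 1 - m) m).image (List.range (m+1) ++ ·)).card = (n-1).choose m := by
      intro m hm
      rw [Finset.card_image_of_injective _ (fun x y h => List.append_cancel_left h),
        card_decFinset]
      congr 1
      simp at hm
      omega
    rw [Finset.sum_congr rfl h1]
    have h2 := Nat.sum_range_choose (n - 1)
    rwa [show n - 1 + 1 = n by omega] at h2
  · intro a ha b hb hab
    simp only [Finset.coe_range, Set.mem_Iio] at ha hb
    rcases lt_or_gt_of_ne hab with h | h
    · exact mainFinset_disj_aux hb h
    · exact (mainFinset_disj_aux ha h).symm

theorem set_eq_mainFinset {n : ℕ} (hn : 1 ≤ n) :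
    {l : List ℕ | l.length = n ∧ IsAscSeq l ∧ ¬ Contains001 l} = ↑(mainFinset n) := by
  ext l
  simp only [Set.mem_setOf_eq, Finset.mem_coe, mainFinset, Finset.mem_biUnion,
    Finset.mem_range, Finset.mem_image]
  constructor
  · rintro ⟨hlen, hasc, hav⟩
    obtain ⟨m, h1, h2, h3⟩ := avoid_form hasc hav
    have hm1 : m + 1 ≤ n := hlen ▸ form_len h1
    refine ⟨m, by omega, l.drop (m+1), ?_, ?_⟩
    · rw [mem_decFinset]
      refine ⟨by simp [hlen]; omega, h2, h3⟩
    · rw [← h1, List.take_append_drop]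
  · rintro ⟨m, hm, t, ht, rfl⟩
    obtain ⟨hlen, hsort, hbd⟩ := (mem_decFinset _ _ t).mp ht
    have h1 : (List.range (m+1) ++ t).take (m+1) = List.range (m+1) := by
      have := List.take_left (l₁ := List.range (m+1)) (l₂ := t)
      simpa using this
    have h2 : (List.range (m+1) ++ t).drop (m+1) = t := by
      have := List.drop_left (l₁ := List.range (m+1)) (l₂ := t)
      simpa using this
    refine ⟨by simp [hlen]; omega, form_ascseq h1 (by rw [h2]; exact hbd),
      form_avoid h1 (by rw [h2]; exact hsort) (by rw [h2]; exact hbd)⟩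

/-- An ascent sequence avoids 001 iff it is a strictly increasing prefix `0,1,…,m`
followed by a weakly decreasing sequence of letters at most `m`; consequently there are
`2^(n-1)` such sequences of length `n`. -/
theorem stmt4 (n : ℕ) (hn : 1 ≤ n) :
    (∀ l : List ℕ, IsAscSeq l →
      (¬ Contains001 l ↔ ∃ m, l.take (m + 1) = List.range (m + 1) ∧
        (l.drop (m + 1)).Pairwise (· ≥ ·) ∧ ∀ x ∈ l.drop (m + 1), x ≤ m)) ∧
    {l : List ℕ | l.length = n ∧ IsAscSeq l ∧ ¬ Contains001 l}.ncard = 2 ^ (n - 1) := by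
  refine ⟨fun l hasc => ⟨avoid_form hasc, fun ⟨m, h1, h2, h3⟩ => form_avoid h1 h2 h3⟩, ?_⟩
  rw [set_eq_mainFinset hn, Set.ncard_coe_finset, card_mainFinset hn]
end

section
/- An ascent sequence avoids the pattern 010 if and only if it is weakly increasing, and the number of ascent sequences of length n avoiding 010 is 2^{n-1}. -/
/-- A sequence contains the pattern 010. -/
def Contains010 (l : List ℕ) : Prop :=
  ∃ i j k, i < j ∧ j < k ∧ k < l.length ∧
    l.getD i 0 = l.getD k 0 ∧ l.getD i 0 < l.getD j 0

/- ### auxiliary lemmas -/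

lemma ascList_nil : ascList [] = 0 := rfl

lemma ascList_single (a : ℕ) : ascList [a] = 0 := rfl

lemma ascList_cons (a : ℕ) (l : List ℕ) :
    ascList (a :: l) = (if a < l.headD 0 ∧ l ≠ [] then 1 else 0) + ascList l := by
  cases l with
  | nil => simp [ascList]
  | cons b t =>
    simp only [ascList, List.zip_cons_cons, List.tail_cons, List.countP_cons, List.headD_cons]
    by_cases h : a < b <;> simp [h, Nat.add_comm]

lemma ascList_append_pair (l : List ℕ) (a b : ℕ) :
    ascList (l ++ [a, b]) = ascList (l ++ [a]) + (if a < b then 1 else 0) := by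
  induction l with
  | nil =>
    simp only [List.nil_append, ascList_cons, ascList_single, ascList_nil]
    by_cases h : a < b <;> simp [h]
  | cons c t ih =>
    have h1 : (t ++ [a, b]).headD 0 = (t ++ [a]).headD 0 := by cases t <;> simp
    have h2 : (t ++ [a, b]) ≠ [] := by simp
    have h3 : (t ++ [a]) ≠ [] := by simp
    simp only [List.cons_append, ascList_cons, h1, ih, ne_eq, h2, h3, not_false_iff, and_true]
    by_cases hc : c < (t ++ [a]).headD 0 <;> simp [hc] <;> omega

lemma take_succ_getD (l : List ℕ) (i : ℕ) (h : i < l.length) :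
    l.take (i + 1) = l.take i ++ [l.getD i 0] := by
  rw [List.getD_eq_getElem l 0 h]
  exact (List.take_concat_get' l i h).symm

/-- For a sorted-so-far ascent sequence, the ascent count of the prefix ending at `m`
is at most the value at `m`. -/
lemma asc_le_val (l : List ℕ) (h : IsAscSeq l) :
    ∀ m, m < l.length → (∀ i, i + 1 ≤ m → l.getD i 0 ≤ l.getD (i+1) 0) →
      ascList (l.take (m+1)) ≤ l.getD m 0 := by
  obtain ⟨hne, h0, hasc⟩ := h
  intro m
  induction m with
  | zero =>
    intro hm _
    obtain ⟨a, t, rfl⟩ := List.exists_cons_of_ne_nil hne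
    simp [ascList_single, List.take, h0]
  | succ m ih =>
    intro hm hsort
    have hm' : m < l.length := by omega
    have step1 : l.take (m+1) = l.take m ++ [l.getD m 0] := take_succ_getD l m hm'
    have step2 : l.take (m+2) = l.take (m+1) ++ [l.getD (m+1) 0] := take_succ_getD l (m+1) hm
    rw [step2, step1, List.append_assoc]
    have : (l.take m ++ ([l.getD m 0] ++ [l.getD (m+1) 0])) = l.take m ++ [l.getD m 0, l.getD (m+1) 0] := by simp
    rw [this, ascList_append_pair, ← step1]
    have hih : ascList (l.take (m+1)) ≤ l.getD m 0 :=
      ih hm' (fun i hi => hsort i (by omega))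
    have hmono : l.getD m 0 ≤ l.getD (m+1) 0 := hsort m le_rfl
    by_cases hlt : l.getD m 0 < l.getD (m+1) 0
    · rw [if_pos hlt]; omega
    · rw [if_neg hlt]; omega

/-- Every value up to the current one occurs among sorted-so-far prefix. -/
lemma val_covered (l : List ℕ) (h : IsAscSeq l) :
    ∀ m, m < l.length → (∀ i, i + 1 ≤ m → l.getD i 0 ≤ l.getD (i+1) 0) →
      ∀ v, v ≤ l.getD m 0 → ∃ t, t ≤ m ∧ l.getD t 0 = v := by
  obtain ⟨hne, h0, hasc⟩ := h
  intro m
  induction m with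
  | zero =>
    intro _ _ v hv
    exact ⟨0, le_rfl, by omega⟩
  | succ m ih =>
    intro hm hsort v hv
    have hm' : m < l.length := by omega
    have hkey : ascList (l.take (m+1)) ≤ l.getD m 0 :=
      asc_le_val l ⟨hne, h0, hasc⟩ m hm' (fun i hi => hsort i (by omega))
    have hstep : l.getD (m+1) 0 ≤ ascList (l.take (m+1)) + 1 :=
      hasc (m+1) (by omega) hm
    by_cases hvm : v ≤ l.getD m 0
    · obtain ⟨t, ht, hteq⟩ := ih hm' (fun i hi => hsort i (by omega)) v hvm
      exact ⟨t, by omega, hteq⟩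
    · exact ⟨m+1, le_rfl, by omega⟩

lemma sorted_iff_getD (l : List ℕ) :
    l.Pairwise (· ≤ ·) ↔ ∀ i, i + 1 < l.length → l.getD i 0 ≤ l.getD (i+1) 0 := by
  rw [← List.isChain_iff_pairwise, List.isChain_iff_getElem]
  constructor
  · intro h i hi
    have hi1 : i < l.length - 1 := by omega
    have := h i (by omega)
    rwa [← List.getD_eq_getElem l 0 (by omega : i < l.length),
      ← List.getD_eq_getElem l 0 (by omega : i + 1 < l.length)] at this
  · intro h i hi
    have hi2 : i + 1 < l.length := by omega
    have := h i hi2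
    rwa [List.getD_eq_getElem l 0 (by omega : i < l.length),
      List.getD_eq_getElem l 0 hi2] at this

lemma not_contains_of_sorted (l : List ℕ) (hs : l.Pairwise (· ≤ ·)) : ¬ Contains010 l := by
  rintro ⟨i, j, k, hij, hjk, hk, heq, hlt⟩
  have : l.getD j 0 ≤ l.getD k 0 := by
    have := List.pairwise_iff_getElem.mp hs j k (by omega) hk hjk
    rwa [← List.getD_eq_getElem l 0 (by omega : j < l.length),
      ← List.getD_eq_getElem l 0 hk] at this
  omega

lemma contains_of_not_sorted (l : List ℕ) (h : IsAscSeq l) (hs : ¬ l.Pairwise (· ≤ ·)) :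
    Contains010 l := by
  have hdesc : ∃ m, m + 1 < l.length ∧ l.getD (m+1) 0 < l.getD m 0 := by
    by_contra hc
    push_neg at hc
    exact hs ((sorted_iff_getD l).mpr (fun i hi => hc i hi))
  classical
  have hP : ∃ m, m + 1 < l.length ∧ l.getD (m+1) 0 < l.getD m 0 := hdesc
  set m := Nat.find hP with hmdef
  have hm1 : m + 1 < l.length := (Nat.find_spec hP).1
  have hm2 : l.getD (m+1) 0 < l.getD m 0 := (Nat.find_spec hP).2
  have hmin : ∀ k, k < m → ¬ (k + 1 < l.length ∧ l.getD (k+1) 0 < l.getD k 0) :=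
    fun k hk => Nat.find_min hP hk
  have hsort : ∀ i, i + 1 ≤ m → l.getD i 0 ≤ l.getD (i+1) 0 := by
    intro i hi
    have := hmin i (by omega)
    simp only [not_and, not_lt] at this
    exact this (by omega)
  have hcov := val_covered l h m (by omega) hsort (l.getD (m+1) 0) (by omega)
  obtain ⟨t, ht, hteq⟩ := hcov
  have htm : t < m := by
    rcases Nat.lt_or_ge t m with h' | h'
    · exact h'
    · exfalso
      have heq : t = m := by omega
      rw [heq] at hteq
      omega
  exact ⟨t, m, m+1, htm, by omega, hm1, by omega, by omega⟩

/-! ### step sequences and counting -/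

def stepf : ℕ → Bool → ℕ := fun a b => a + (if b then 1 else 0)

def build (bs : List Bool) : List ℕ := List.scanl stepf 0 bs

lemma build_length (bs : List Bool) : (build bs).length = bs.length + 1 :=
  List.length_scanl

lemma scanl_ne_nil (a : ℕ) (bs : List Bool) : List.scanl stepf a bs ≠ [] := by
  cases bs <;> simp [List.scanl]

lemma scanl_head (a : ℕ) (bs : List Bool) : (List.scanl stepf a bs).headD 0 = a := by
  cases bs <;> simp [List.scanl]

lemma scanl_chain (a : ℕ) (bs : List Bool) :
    List.Chain' (fun x y => y = x ∨ y = x + 1) (List.scanl stepf a bs) := by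
  induction bs generalizing a with
  | nil => simp [List.scanl, List.Chain']
  | cons b t ih =>
    rw [List.scanl_cons]
    refine List.isChain_cons.mpr ⟨?_, ih (stepf a b)⟩
    intro y hy
    have : y = stepf a b := by
      have := scanl_head (stepf a b) t
      cases hh : List.scanl stepf (stepf a b) t with
      | nil => exact absurd hh (scanl_ne_nil _ _)
      | cons c u => rw [hh] at hy this; simp at hy this; omega
    cases b <;> simp [stepf] at this <;> omega

lemma scanl_inj : ∀ (bs₁ bs₂ : List Bool) (a : ℕ),
    List.scanl stepf a bs₁ = List.scanl stepf a bs₂ → bs₁ = bs₂ := by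
  intro bs₁
  induction bs₁ with
  | nil =>
    intro bs₂ a h
    cases bs₂ with
    | nil => rfl
    | cons b t =>
      exfalso
      have := congrArg List.length h
      simp [List.scanl_cons, List.scanl_nil, List.length_scanl] at this
  | cons b₁ t₁ ih =>
    intro bs₂ a h
    cases bs₂ with
    | nil =>
      exfalso
      have := congrArg List.length h
      simp [List.scanl_cons, List.scanl_nil, List.length_scanl] at this
    | cons b₂ t₂ =>
      rw [List.scanl_cons, List.scanl_cons] at h
      have htl : List.scanl stepf (stepf a b₁) t₁ = List.scanl stepf (stepf a b₂) t₂ :=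
        List.tail_eq_of_cons_eq h
      have hhd : stepf a b₁ = stepf a b₂ := by
        have h1 := scanl_head (stepf a b₁) t₁
        have h2 := scanl_head (stepf a b₂) t₂
        rw [htl] at h1
        omega
    -- from hhd derive b₁ = b₂
      have hb : b₁ = b₂ := by
        cases b₁ <;> cases b₂ <;> simp [stepf] at hhd ⊢ <;> omega
      subst hb
      exact congrArg (b₁ :: ·) (ih t₂ (stepf a b₁) htl)

lemma build_inj : Function.Injective build := fun b₁ b₂ h => scanl_inj b₁ b₂ 0 h

/-- chain characterization of 010-avoiding ascent sequences. -/
lemma step_chain_iff (l : List ℕ) :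
    (IsAscSeq l ∧ l.Pairwise (· ≤ ·)) ↔
      (l ≠ [] ∧ l.getD 0 0 = 0 ∧ List.Chain' (fun x y => y = x ∨ y = x + 1) l) := by
  constructor
  · rintro ⟨hA, hS⟩
    obtain ⟨hne, h0, hasc⟩ := hA
    refine ⟨hne, h0, ?_⟩
    rw [List.Chain', List.isChain_iff_getElem]
    intro i hi
    have hi2 : i + 1 < l.length := by omega
    have hsort : ∀ j, j + 1 < l.length → l.getD j 0 ≤ l.getD (j+1) 0 :=
      (sorted_iff_getD l).mp hS
    have hkey : ascList (l.take (i+1)) ≤ l.getD i 0 :=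
      asc_le_val l ⟨hne, h0, hasc⟩ i (by omega) (fun j hj => hsort j (by omega))
    have hstep : l.getD (i+1) 0 ≤ ascList (l.take (i+1)) + 1 := hasc (i+1) (by omega) hi2
    have hmono : l.getD i 0 ≤ l.getD (i+1) 0 := hsort i hi2
    rw [← List.getD_eq_getElem l 0 (by omega : i < l.length),
      ← List.getD_eq_getElem l 0 hi2]
    omega
  · rintro ⟨hne, h0, hch⟩
    have hstep : ∀ i, i + 1 < l.length →
        l.getD (i+1) 0 = l.getD i 0 ∨ l.getD (i+1) 0 = l.getD i 0 + 1 := by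
      intro i hi
      have := List.isChain_iff_getElem.mp hch i (by omega)
      rwa [← List.getD_eq_getElem l 0 (by omega : i < l.length),
        ← List.getD_eq_getElem l 0 hi] at this
    have hS : l.Pairwise (· ≤ ·) := (sorted_iff_getD l).mpr (by
      intro i hi; rcases hstep i hi with h | h <;> omega)
    refine ⟨⟨hne, h0, ?_⟩, hS⟩
    -- ascent property: value equals ascent count of prefix
    have hval : ∀ i, i < l.length → l.getD i 0 = ascList (l.take (i+1)) := by
      intro i
      induction i with
      | zero =>
        intro _
        obtain ⟨a, t, rfl⟩ := List.exists_cons_of_ne_nil hne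
        simp only [List.getD_cons_zero] at h0 ⊢
        simp [List.take, ascList_single, h0]
      | succ i ih =>
        intro hi
        have hi' : i < l.length := by omega
        rw [take_succ_getD l (i+1) hi, take_succ_getD l i hi', List.append_assoc]
        have : ([l.getD i 0] ++ [l.getD (i+1) 0]) = [l.getD i 0, l.getD (i+1) 0] := rfl
        rw [this, ascList_append_pair, ← take_succ_getD l i hi', ← ih hi']
        rcases hstep i hi with h | h
        · rw [if_neg (by omega : ¬ l.getD i 0 < l.getD (i+1) 0)]; omega
        · rw [if_pos (by omega : l.getD i 0 < l.getD (i+1) 0)]; omega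
    intro i hipos hilen
    have h1 := hval i hilen
    have : ascList (l.take i) + 1 = ascList (l.take (i+1)) ∨
        ascList (l.take i) + 1 = ascList (l.take (i+1)) + 1 := by
      obtain ⟨j, rfl⟩ : ∃ j, i = j + 1 := ⟨i - 1, by omega⟩
      have hj : j < l.length := by omega
      rw [take_succ_getD l (j+1) hilen, take_succ_getD l j hj, List.append_assoc]
      have he : ([l.getD j 0] ++ [l.getD (j+1) 0]) = [l.getD j 0, l.getD (j+1) 0] := rfl
      rw [he, ascList_append_pair, ← take_succ_getD l j hj]
      by_cases hc : l.getD j 0 < l.getD (j+1) 0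
      · rw [if_pos hc]; omega
      · rw [if_neg hc]; omega
    omega

lemma chain_iff_build (l : List ℕ) :
    (l ≠ [] ∧ l.getD 0 0 = 0 ∧ List.Chain' (fun x y => y = x ∨ y = x + 1) l) ↔
      ∃ bs : List Bool, build bs = l := by
  constructor
  · rintro ⟨hne, h0, hch⟩
    -- generalize: for any nonempty chain' list starting at a, it is scanl stepf a bs
    suffices h : ∀ (m : List ℕ) (a : ℕ), m ≠ [] → m.headD 0 = a →
        List.Chain' (fun x y => y = x ∨ y = x + 1) m → ∃ bs, List.scanl stepf a bs = m by
      obtain ⟨bs, hbs⟩ := h l 0 hne (by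
        obtain ⟨a, t, rfl⟩ := List.exists_cons_of_ne_nil hne
        simpa using h0) hch
      exact ⟨bs, hbs⟩
    intro m
    induction m with
    | nil => intro a h; exact absurd rfl h
    | cons x t ih =>
      intro a _ hhd hch
      simp only [List.headD_cons] at hhd
      subst hhd
      cases t with
      | nil => exact ⟨[], rfl⟩
      | cons y u =>
        have hrel : y = x ∨ y = x + 1 := (List.isChain_cons_cons.mp hch).1
        have hch' : List.Chain' (fun x y => y = x ∨ y = x + 1) (y :: u) :=
          (List.isChain_cons_cons.mp hch).2
        obtain ⟨bs, hbs⟩ := ih y (by simp) (by simp) hch'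
        refine ⟨(decide (y = x + 1)) :: bs, ?_⟩
        rw [List.scanl_cons]
        have hf : stepf x (decide (y = x + 1)) = y := by
          rcases hrel with h | h <;> simp [stepf, h] <;> omega
        rw [hf, hbs]
  · rintro ⟨bs, rfl⟩
    refine ⟨scanl_ne_nil 0 bs, ?_, scanl_chain 0 bs⟩
    have := scanl_head 0 bs
    cases hh : List.scanl stepf 0 bs with
    | nil => exact absurd hh (scanl_ne_nil _ _)
    | cons c u => rw [hh] at this; simp at this; simp [build, hh, this]

lemma card_lists_bool (m : ℕ) : {bs : List Bool | bs.length = m}.ncard = 2 ^ m := by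
  rw [← Nat.card_coe_set_eq]
  have h1 : Nat.card ↥{bs : List Bool | bs.length = m} = Nat.card (List.Vector Bool m) :=
    Nat.card_congr (Equiv.subtypeEquivRight (fun x => Iff.rfl))
  rw [h1, Nat.card_eq_fintype_card, card_vector]
  simp

/-- An ascent sequence avoids 010 iff it is weakly increasing; consequently there are
`2^(n-1)` ascent sequences of length `n` avoiding 010. -/
theorem stmt5 (n : ℕ) (hn : 1 ≤ n) :
    (∀ l : List ℕ, IsAscSeq l → (¬ Contains010 l ↔ l.Pairwise (· ≤ ·))) ∧
    {l : List ℕ | l.length = n ∧ IsAscSeq l ∧ ¬ Contains010 l}.ncard = 2 ^ (n - 1) := by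
  have part1 : ∀ l : List ℕ, IsAscSeq l → (¬ Contains010 l ↔ l.Pairwise (· ≤ ·)) := by
    intro l hA
    constructor
    · intro hc
      by_contra hs
      exact hc (contains_of_not_sorted l hA hs)
    · exact not_contains_of_sorted l
  refine ⟨part1, ?_⟩
  have hset : {l : List ℕ | l.length = n ∧ IsAscSeq l ∧ ¬ Contains010 l} =
      build '' {bs : List Bool | bs.length = n - 1} := by
    ext l
    simp only [Set.mem_setOf_eq, Set.mem_image]
    constructor
    · rintro ⟨hlen, hA, hC⟩
      have hS : l.Pairwise (· ≤ ·) := (part1 l hA).mp hC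
      have := (step_chain_iff l).mp ⟨hA, hS⟩
      obtain ⟨bs, hbs⟩ := (chain_iff_build l).mp this
      refine ⟨bs, ?_, hbs⟩
      have := build_length bs
      rw [hbs] at this
      omega
    · rintro ⟨bs, hbslen, rfl⟩
      have hch := (chain_iff_build (build bs)).mpr ⟨bs, rfl⟩
      have := (step_chain_iff (build bs)).mpr hch
      refine ⟨?_, this.1, (part1 _ this.1).mpr this.2⟩
      rw [build_length, hbslen]
      omega
  rw [hset, Set.ncard_image_of_injective _ build_inj, card_lists_bool]
end
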